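/- Let n, m, p ≥ 1; for j = 1, …, m let Q_j ∈ ℝⁿˣⁿ be symmetric positive semidefinite, and for i = 0, 1, …, p let a_{ij} ∈ {−1, 0, 1}, b_i ∈ ℝⁿ, c_i ∈ ℝ, and g_i(x) = Σ_{j=1}^m a_{ij} xᵀQ_j x + 2 b_iᵀx + c_i. Let J = { j ∈ {1, …, m} : a_{ij} = −1 for some i ∈ {0, 1, …, p} }, and consider (QCQP₁): minimize g₀(x) over x ∈ ℝⁿ subject to g_i(x) ≤ 0 for i = 1, …, p, together with its relaxation (CR): minimize Σ_{j∉J} a_{0j} xᵀQ_j x + Σ_{j∈J} a_{0j} t_j + 2 b₀ᵀx + c₀ over x ∈ ℝⁿ and (t_j)_{j∈J} ∈ ℝᴶ, subject to Σ_{j∉J} a_{ij} xᵀQ_j x + Σ_{j∈J} a_{ij} t_j + 2 b_iᵀx + c_i ≤ 0 for i = 1, …, p, and xᵀQ_j x ≤ t_j for each j ∈ J. Suppose that for every j ∈ J, the dimension of the linear span of span{b₁, …, b_p} ∪ N(Q_j) ∪ ⋃_{i ∈ {1,…,m}, i ≠ j} R(Q_i) is at most n − 1, and that the optimal value of (CR)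 is > −∞. Then (QCQP₁) and (CR) are equivalent: x* is a global minimizer of (QCQP₁) if and only if (x*, (x*ᵀQ_j x*)_{j∈J}) is a global minimizer of (CR). -/

import Mathlib

open Matrix

noncomputable section

/-- The quadratic form `xᵀ M x`. -/
def qf {n : ℕ} (M : Matrix (Fin n) (Fin n) ℝ) (x : Fin n → ℝ) : ℝ := x ⬝ᵥ (M *ᵥ x)

lemma dot_mulVec_symm {n : ℕ} {M : Matrix (Fin n) (Fin n) ℝ} (hM : Mᵀ = M) (x y : Fin n → ℝ) :
    x ⬝ᵥ (M *ᵥ y) = y ⬝ᵥ (M *ᵥ x) := by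
  rw [Matrix.dotProduct_mulVec, ← Matrix.mulVec_transpose, hM, dotProduct_comm]

lemma psd_dot_pos {n : ℕ} {M : Matrix (Fin n) (Fin n) ℝ} (hM : M.PosSemidef)
    {x : Fin n → ℝ} (hx : M *ᵥ x ≠ 0) : 0 < x ⬝ᵥ (M *ᵥ x) := by
  rcases lt_or_eq_of_le (hM.dotProduct_mulVec_nonneg x) with h | h
  · simpa using h
  · exact absurd ((hM.dotProduct_mulVec_zero_iff x).mp (by simpa using h.symm)) hx

lemma quad_root (α β γ σ : ℝ) (hα : 0 < α) (hγ : γ ≤ 0) :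
    ∃ s : ℝ, α * s ^ 2 + β * s + γ = 0 ∧ σ * s ≤ 0 := by
  have hdisc : 0 ≤ β ^ 2 - 4 * α * γ := by nlinarith
  set δ := Real.sqrt (β ^ 2 - 4 * α * γ) with hδ
  have hδ2 : δ ^ 2 = β ^ 2 - 4 * α * γ := Real.sq_sqrt hdisc
  have hδnn : 0 ≤ δ := Real.sqrt_nonneg _
  have habs : |β| ≤ δ := by
    rw [← Real.sqrt_sq_eq_abs]
    exact Real.sqrt_le_sqrt (by nlinarith)
  rcases le_or_gt σ 0 with hσ | hσ
  · refine ⟨(-β + δ) / (2 * α), ?_, ?_⟩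
    · field_simp; nlinarith
    · have h0 : 0 ≤ (-β + δ) / (2 * α) := by
        apply div_nonneg _ (by linarith)
        have := le_abs_self β
        linarith
      exact mul_nonpos_of_nonpos_of_nonneg hσ h0
  · refine ⟨(-β - δ) / (2 * α), ?_, ?_⟩
    · field_simp; nlinarith
    · have h0 : (-β - δ) / (2 * α) ≤ 0 := by
        apply div_nonpos_of_nonpos_of_nonneg _ (by linarith)
        have := neg_abs_le β
        linarith
      exact mul_nonpos_of_nonneg_of_nonpos hσ.le h0

lemma exists_dir {n m p : ℕ} (hn : 1 ≤ n)
    (Q : Fin m → Matrix (Fin n) (Fin n) ℝ) (hQ : ∀ j, (Q j).PosSemidef)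
    (b : Fin p → Fin n → ℝ) (j : Fin m)
    (hdimj : Module.finrank ℝ
        ↥(Submodule.span ℝ (Set.range b) ⊔ LinearMap.ker (Q j).mulVecLin ⊔
            ⨆ i : Fin m, ⨆ _ : i ≠ j, LinearMap.range (Q i).mulVecLin) ≤ n - 1) :
    ∃ d : Fin n → ℝ, (∀ i, b i ⬝ᵥ d = 0) ∧ (∀ k, k ≠ j → Q k *ᵥ d = 0) ∧
      0 < d ⬝ᵥ (Q j *ᵥ d) := by
  classical
  set E := EuclideanSpace ℝ (Fin n)
  let e : (Fin n → ℝ) ≃ₗ[ℝ] E := (WithLp.linearEquiv 2 ℝ (Fin n → ℝ)).symm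
  let eL : (Fin n → ℝ) →ₗ[ℝ] E := e.toLinearMap
  set U : Submodule ℝ (Fin n → ℝ) :=
    Submodule.span ℝ (Set.range b) ⊔
      ⨆ i : Fin m, ⨆ _ : i ≠ j, LinearMap.range (Q i).mulVecLin with hU
  set W : Submodule ℝ (Fin n → ℝ) :=
    Submodule.span ℝ (Set.range b) ⊔ LinearMap.ker (Q j).mulVecLin ⊔
      ⨆ i : Fin m, ⨆ _ : i ≠ j, LinearMap.range (Q i).mulVecLin with hW
  have hWU : U ⊔ LinearMap.ker (Q j).mulVecLin = W := by
    rw [hU, hW]; ac_rfl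
  have hle : ¬ ((U.map eL)ᗮ ≤ (LinearMap.ker (Q j).mulVecLin).map eL) := by
    intro hcon
    have htop : (⊤ : Submodule ℝ E) = (W.map eL) := by
      have h1 : U.map eL ⊔ (U.map eL)ᗮ = ⊤ := Submodule.sup_orthogonal_of_hasOrthogonalProjection
      have h2 : U.map eL ⊔ (U.map eL)ᗮ ≤ W.map eL := by
        apply sup_le
        · exact Submodule.map_mono (by rw [← hWU]; exact le_sup_left)
        · exact le_trans hcon (Submodule.map_mono (by rw [← hWU]; exact le_sup_right))
      exact le_antisymm (h1 ▸ h2) le_top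
    have h3 : Module.finrank ℝ E ≤ n - 1 := by
      rw [show Module.finrank ℝ E = Module.finrank ℝ (⊤ : Submodule ℝ E) from
        (finrank_top ℝ E).symm, htop, LinearEquiv.finrank_map_eq e W]
      exact hdimj
    have hE : Module.finrank ℝ E = n := by simp [E]
    omega
  obtain ⟨d', hd'mem, hd'not⟩ := SetLike.not_le_iff_exists.mp hle
  have hdot : ∀ u ∈ U, u ⬝ᵥ (e.symm d') = 0 := by
    intro u hu
    have := (Submodule.mem_orthogonal _ _).mp hd'mem _ (Submodule.mem_map_of_mem (f := eL) hu)
    have h2 : ∑ k, (eL u) k * d' k = 0 := by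
      rw [← this, EuclideanSpace.inner_eq_star_dotProduct]; simp [dotProduct, mul_comm]
    exact h2
  refine ⟨e.symm d', ?_, ?_, ?_⟩
  · intro i
    exact hdot (b i) (Submodule.mem_sup_left (Submodule.subset_span ⟨i, rfl⟩))
  · intro k hk
    have hgen : ∀ y : Fin n → ℝ, (Q k *ᵥ y) ⬝ᵥ (e.symm d') = 0 := by
      intro y
      apply hdot
      apply Submodule.mem_sup_right
      apply Submodule.mem_iSup_of_mem k
      apply Submodule.mem_iSup_of_mem hk
      exact ⟨y, rfl⟩
    have hsymm : (Q k)ᵀ = Q k := by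
      have := (hQ k).1
      rwa [Matrix.IsHermitian, Matrix.conjTranspose_eq_transpose_of_trivial] at this
    have key : (Q k *ᵥ e.symm d') ⬝ᵥ (Q k *ᵥ e.symm d') = 0 := by
      calc (Q k *ᵥ e.symm d') ⬝ᵥ (Q k *ᵥ e.symm d')
          = (e.symm d') ⬝ᵥ (Q k *ᵥ (Q k *ᵥ e.symm d')) := dot_mulVec_symm hsymm _ _
        _ = (Q k *ᵥ (Q k *ᵥ e.symm d')) ⬝ᵥ (e.symm d') := dotProduct_comm _ _
        _ = 0 := hgen _
    exact (dotProduct_self_eq_zero).mp key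
  · apply psd_dot_pos (hQ j)
    intro hker
    exact hd'not ⟨e.symm d', LinearMap.mem_ker.mpr (by simpa using hker), by simp [eL, e]⟩

lemma dot_sum {n : ℕ} {ι : Type*} (v : Fin n → ℝ) (s : Finset ι) (f : ι → Fin n → ℝ) :
    v ⬝ᵥ (∑ i ∈ s, f i) = ∑ i ∈ s, v ⬝ᵥ f i := by
  simp only [dotProduct, Finset.sum_apply, Finset.mul_sum]
  exact Finset.sum_comm

lemma sum_dot {n : ℕ} {ι : Type*} (v : Fin n → ℝ) (s : Finset ι) (f : ι → Fin n → ℝ) :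
    (∑ i ∈ s, f i) ⬝ᵥ v = ∑ i ∈ s, f i ⬝ᵥ v := by
  rw [dotProduct_comm, dot_sum]
  simp [dotProduct_comm]

lemma mulVec_sum' {n : ℕ} {ι : Type*} (M : Matrix (Fin n) (Fin n) ℝ) (s : Finset ι)
    (f : ι → Fin n → ℝ) : M *ᵥ (∑ i ∈ s, f i) = ∑ i ∈ s, M *ᵥ f i := by
  rw [show M *ᵥ (∑ i ∈ s, f i) = M.mulVecLin (∑ i ∈ s, f i) from rfl, map_sum]
  rfl
/-- equivalence of the one-sided QCQP and its convex relaxation (CR). -/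
theorem stmt3 (n m p : ℕ) (hn : 1 ≤ n) (hm : 1 ≤ m) (hp : 1 ≤ p)
    (Q : Fin m → Matrix (Fin n) (Fin n) ℝ) (hQ : ∀ j, (Q j).PosSemidef)
    (a0 : Fin m → ℝ) (a : Fin p → Fin m → ℝ)
    (ha0 : ∀ j, a0 j = -1 ∨ a0 j = 0 ∨ a0 j = 1)
    (ha : ∀ i j, a i j = -1 ∨ a i j = 0 ∨ a i j = 1)
    (b0 : Fin n → ℝ) (b : Fin p → Fin n → ℝ) (c0 : ℝ) (c : Fin p → ℝ)
    (J : Finset (Fin m))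
    (hJ : ∀ j, j ∈ J ↔ (a0 j = -1 ∨ ∃ i, a i j = -1))
    (hdim : ∀ j ∈ J,
      Module.finrank ℝ
        ↥(Submodule.span ℝ (Set.range b) ⊔ LinearMap.ker (Q j).mulVecLin ⊔
            ⨆ i : Fin m, ⨆ _ : i ≠ j, LinearMap.range (Q i).mulVecLin) ≤ n - 1)
    (hCR : sInf ((fun q : (Fin n → ℝ) × (Fin m → ℝ) =>
        (((∑ j ∈ Jᶜ, a0 j * qf (Q j) q.1) + (∑ j ∈ J, a0 j * q.2 j)
            + 2 * (b0 ⬝ᵥ q.1) + c0 : ℝ) : EReal)) ''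
      {q | (∀ i, (∑ j ∈ Jᶜ, a i j * qf (Q j) q.1) + (∑ j ∈ J, a i j * q.2 j)
              + 2 * (b i ⬝ᵥ q.1) + c i ≤ 0) ∧
           (∀ j ∈ J, qf (Q j) q.1 ≤ q.2 j)}) ≠ ⊥)
    (xs : Fin n → ℝ) :
    -- `xs` globally solves (QCQP₁)
    ((∀ i, (∑ j, a i j * qf (Q j) xs) + 2 * (b i ⬝ᵥ xs) + c i ≤ 0) ∧
      (∀ x : Fin n → ℝ,
        (∀ i, (∑ j, a i j * qf (Q j) x) + 2 * (b i ⬝ᵥ x) + c i ≤ 0) →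
        (∑ j, a0 j * qf (Q j) xs) + 2 * (b0 ⬝ᵥ xs) + c0 ≤
          (∑ j, a0 j * qf (Q j) x) + 2 * (b0 ⬝ᵥ x) + c0)) ↔
    -- `(xs, (xsᵀ Q_j xs)_j)` globally solves (CR)
    (((∀ i, (∑ j ∈ Jᶜ, a i j * qf (Q j) xs) + (∑ j ∈ J, a i j * qf (Q j) xs)
            + 2 * (b i ⬝ᵥ xs) + c i ≤ 0) ∧
        (∀ j ∈ J, qf (Q j) xs ≤ qf (Q j) xs)) ∧
      (∀ (x : Fin n → ℝ) (t : Fin m → ℝ),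
        ((∀ i, (∑ j ∈ Jᶜ, a i j * qf (Q j) x) + (∑ j ∈ J, a i j * t j)
              + 2 * (b i ⬝ᵥ x) + c i ≤ 0) ∧
          (∀ j ∈ J, qf (Q j) x ≤ t j)) →
        (∑ j ∈ Jᶜ, a0 j * qf (Q j) xs) + (∑ j ∈ J, a0 j * qf (Q j) xs)
            + 2 * (b0 ⬝ᵥ xs) + c0 ≤
          (∑ j ∈ Jᶜ, a0 j * qf (Q j) x) + (∑ j ∈ J, a0 j * t j)
            + 2 * (b0 ⬝ᵥ x) + c0)) := by
  classical
  have hsplit : ∀ (f : Fin m → ℝ), (∑ j ∈ Jᶜ, f j) + (∑ j ∈ J, f j) = ∑ j, f j :=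
    fun f => Finset.sum_compl_add_sum J f
  constructor
  · rintro ⟨hfeas, hopt⟩
    refine ⟨⟨fun i => by rw [hsplit (fun j => a i j * qf (Q j) xs)]; exact hfeas i,
      fun j _ => le_refl _⟩, ?_⟩
    intro x t ⟨ht1, ht2⟩
    -- choose directions
    have hds : ∀ j : Fin m, ∃ dd : Fin n → ℝ, j ∈ J →
        ((∀ i, b i ⬝ᵥ dd = 0) ∧ (∀ k, k ≠ j → Q k *ᵥ dd = 0) ∧ 0 < dd ⬝ᵥ (Q j *ᵥ dd)) := by
      intro j
      by_cases hj : j ∈ J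
      · obtain ⟨dd, h⟩ := exists_dir hn Q hQ b j (hdim j hj)
        exact ⟨dd, fun _ => h⟩
      · exact ⟨0, fun h => absurd h hj⟩
    choose d hd using hds
    -- choose step sizes
    have hss : ∀ j : Fin m, ∃ s : ℝ, j ∈ J →
        ((d j ⬝ᵥ (Q j *ᵥ d j)) * s ^ 2 + (2 * (d j ⬝ᵥ (Q j *ᵥ x))) * s
            + (qf (Q j) x - t j) = 0 ∧ (2 * (b0 ⬝ᵥ d j)) * s ≤ 0) := by
      intro j
      by_cases hj : j ∈ J
      · obtain ⟨s, hs⟩ := quad_root _ _ _ (2 * (b0 ⬝ᵥ d j)) ((hd j hj).2.2)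
          (sub_nonpos.mpr (ht2 j hj))
        exact ⟨s, fun _ => hs⟩
      · exact ⟨0, fun h => absurd h hj⟩
    choose s hs using hss
    set x' : Fin n → ℝ := x + ∑ j ∈ J, s j • d j with hx'
    have hsym : ∀ k, (Q k)ᵀ = Q k := by
      intro k
      have := (hQ k).1
      rwa [Matrix.IsHermitian, Matrix.conjTranspose_eq_transpose_of_trivial] at this
    -- Q k applied to the perturbation
    have hQS : ∀ k, Q k *ᵥ (∑ j ∈ J, s j • d j) =
        (if k ∈ J then s k • (Q k *ᵥ d k) else 0) := by
      intro k
      rw [mulVec_sum']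
      by_cases hk : k ∈ J
      · rw [if_pos hk, Finset.sum_eq_single_of_mem k hk]
        · rw [Matrix.mulVec_smul]
        · intro j hj hne
          rw [Matrix.mulVec_smul, (hd j hj).2.1 k (Ne.symm hne), smul_zero]
      · rw [if_neg hk]
        apply Finset.sum_eq_zero
        intro j hj
        rw [Matrix.mulVec_smul, (hd j hj).2.1 k (fun h => hk (h ▸ hj)), smul_zero]
    -- linear parts
    have hbi : ∀ i, b i ⬝ᵥ x' = b i ⬝ᵥ x := by
      intro i
      rw [hx', dotProduct_add, dot_sum]
      have : ∀ j ∈ J, b i ⬝ᵥ (s j • d j) = 0 := by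
        intro j hj
        rw [dotProduct_smul, (hd j hj).1 i, smul_zero]
      rw [Finset.sum_congr rfl this]
      simp
    have hb0 : b0 ⬝ᵥ x' ≤ b0 ⬝ᵥ x := by
      rw [hx', dotProduct_add, dot_sum]
      have hterm : ∀ j ∈ J, b0 ⬝ᵥ (s j • d j) ≤ 0 := by
        intro j hj
        have := (hs j hj).2
        rw [dotProduct_smul]
        simp only [smul_eq_mul]
        nlinarith [this]
      nlinarith [Finset.sum_nonpos hterm]
    -- quadratic parts
    have hqf : ∀ k, qf (Q k) x' = if k ∈ J then t k else qf (Q k) x := by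
      intro k
      have hdj0 : ∀ j ∈ J, j ≠ k → ∀ z : Fin n → ℝ, d j ⬝ᵥ (Q k *ᵥ z) = 0 := by
        intro j hj hne z
        rw [dot_mulVec_symm (hsym k), (hd j hj).2.1 k (Ne.symm hne), dotProduct_zero]
      show (x + ∑ j ∈ J, s j • d j) ⬝ᵥ (Q k *ᵥ (x + ∑ j ∈ J, s j • d j)) = _
      rw [Matrix.mulVec_add, hQS k, dotProduct_add, add_dotProduct, add_dotProduct,
        sum_dot, sum_dot]
      by_cases hk : k ∈ J
      · rw [if_pos hk, if_pos hk]
        have e1 : ∑ j ∈ J, (s j • d j) ⬝ᵥ (Q k *ᵥ x) = s k * (d k ⬝ᵥ (Q k *ᵥ x)) := by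
          rw [Finset.sum_eq_single_of_mem k hk]
          · rw [smul_dotProduct]; rfl
          · intro j hj hne
            rw [smul_dotProduct, hdj0 j hj hne x, smul_zero]
        have e2 : ∑ j ∈ J, (s j • d j) ⬝ᵥ (s k • (Q k *ᵥ d k))
            = s k * (s k * (d k ⬝ᵥ (Q k *ᵥ d k))) := by
          rw [Finset.sum_eq_single_of_mem k hk]
          · rw [smul_dotProduct, dotProduct_smul]; simp only [smul_eq_mul]
          · intro j hj hne
            rw [smul_dotProduct, dotProduct_smul, hdj0 j hj hne (d k), smul_zero, smul_zero]
        have e3 : x ⬝ᵥ (s k • (Q k *ᵥ d k)) = s k * (d k ⬝ᵥ (Q k *ᵥ x)) := by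
          rw [dotProduct_smul, dot_mulVec_symm (hsym k)]; rfl
        rw [e1, e2, e3]
        have hroot := (hs k hk).1
        have : qf (Q k) x = x ⬝ᵥ (Q k *ᵥ x) := rfl
        nlinarith [hroot]
      · rw [if_neg hk, if_neg hk]
        have e1 : ∑ j ∈ J, (s j • d j) ⬝ᵥ (Q k *ᵥ x) = 0 := by
          apply Finset.sum_eq_zero
          intro j hj
          rw [smul_dotProduct, hdj0 j hj (fun h => hk (h ▸ hj)) x, smul_zero]
        have e2 : ∑ j ∈ J, (s j • d j) ⬝ᵥ (0 : Fin n → ℝ) = 0 := by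
          simp
        rw [e1, e2, dotProduct_zero]
        simp [qf]
    -- x' is feasible for QCQP
    have hfeas' : ∀ i, (∑ j, a i j * qf (Q j) x') + 2 * (b i ⬝ᵥ x') + c i ≤ 0 := by
      intro i
      have : (∑ j, a i j * qf (Q j) x')
          = (∑ j ∈ Jᶜ, a i j * qf (Q j) x) + (∑ j ∈ J, a i j * t j) := by
        rw [← hsplit (fun j => a i j * qf (Q j) x')]
        congr 1
        · apply Finset.sum_congr rfl
          intro j hj
          rw [hqf j, if_neg (Finset.mem_compl.mp hj)]
        · apply Finset.sum_congr rfl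
          intro j hj
          rw [hqf j, if_pos hj]
      rw [this, hbi i]
      exact ht1 i
    -- conclude
    have hgoal1 : (∑ j ∈ Jᶜ, a0 j * qf (Q j) xs) + (∑ j ∈ J, a0 j * qf (Q j) xs)
        + 2 * (b0 ⬝ᵥ xs) + c0
        ≤ (∑ j, a0 j * qf (Q j) x') + 2 * (b0 ⬝ᵥ x') + c0 := by
      rw [hsplit (fun j => a0 j * qf (Q j) xs)]
      exact hopt x' hfeas'
    have hgoal2 : (∑ j, a0 j * qf (Q j) x') + 2 * (b0 ⬝ᵥ x') + c0
        ≤ (∑ j ∈ Jᶜ, a0 j * qf (Q j) x) + (∑ j ∈ J, a0 j * t j) + 2 * (b0 ⬝ᵥ x) + c0 := by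
      have : (∑ j, a0 j * qf (Q j) x')
          = (∑ j ∈ Jᶜ, a0 j * qf (Q j) x) + (∑ j ∈ J, a0 j * t j) := by
        rw [← hsplit (fun j => a0 j * qf (Q j) x')]
        congr 1
        · exact Finset.sum_congr rfl fun j hj => by
            rw [hqf j, if_neg (Finset.mem_compl.mp hj)]
        · exact Finset.sum_congr rfl fun j hj => by rw [hqf j, if_pos hj]
      rw [this]
      linarith [hb0]
    linarith [hgoal1, hgoal2]
  · rintro ⟨⟨hfeas, -⟩, hopt⟩
    constructor
    · intro i
      rw [← hsplit (fun j => a i j * qf (Q j) xs)]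
      exact hfeas i
    · intro x hx
      have := hopt x (fun j => qf (Q j) x)
        ⟨fun i => by rw [hsplit (fun j => a i j * qf (Q j) x)]; exact hx i,
         fun j _ => le_refl _⟩
      rw [hsplit (fun j => a0 j * qf (Q j) xs), hsplit (fun j => a0 j * qf (Q j) x)] at this
      exact this

end
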